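/- arXiv:0810.5684 — 2 statements merged into one kernel-verified Lean document; each statement's English description precedes it below -/
import Mathlib

section
/- Let B be an additive category with splitting idempotents and let Y be a chain complex over B. Then Y is contractible (i.e., becomes a zero object in the homotopy category K(B)) if and only if Y is isomorphic in the category of complexes C(B) to a complex of the form ∐_{n∈ℤ} I_{X_n,n}, where I_{X,n} denotes the complex ⋯→0→X =→ X→0→⋯ with the two copies of X in degrees n and n+1 and the identity as differential between them. -/
/-!
Statement 1: Let `B` be an additive category with splitting idempotents and `Y` a (cochain)
complex over `B`. Then `Y` is contractible (i.e. becomes a zero object in the homotopy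
category `K(B)`) if and only if `Y` is isomorphic in the category of complexes `C(B)` to a
complex of the form `∐_{n ∈ ℤ} I_{X_n, n}`, where `I_{X,n}` is the complex with `X` in
degrees `n` and `n+1`, the identity as the differential between them, and `0` elsewhere.
(The coproduct is expressed by a colimit cofan over the family `n ↦ I_{X_n, n}`.)
-/

open CategoryTheory CategoryTheory.Limits ZeroObject

universe v u

variable {B : Type u} [Category.{v} B] [Preadditive B] [HasZeroObject B]
  [HasBinaryBiproducts B]

/-- The contractible complex `I_{X,n}`: `⋯ → 0 → X = X → 0 → ⋯` with the two copies of `X`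
placed in degrees `n` and `n+1`. -/
noncomputable def doubleComplex (A : B) (n : ℤ) : CochainComplex B ℤ where
  X i := if i = n ∨ i = n + 1 then A else 0
  d i j :=
    if h : i = n ∧ j = n + 1 then
      eqToHom (if_pos (Or.inl h.1)) ≫ eqToHom (if_pos (Or.inr h.2)).symm
    else 0
  shape i j hij := by
    try dsimp only
    rw [dif_neg]
    rintro ⟨rfl, rfl⟩
    exact hij rfl
  d_comp_d' i j k _ _ := by
    try dsimp only
    by_cases h : i = n ∧ j = n + 1
    · rw [dif_neg (show ¬(j = n ∧ k = n + 1) by rintro ⟨rfl, -⟩; omega), comp_zero]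
    · rw [dif_neg h, zero_comp]


set_option linter.unusedSectionVars false
set_option linter.unusedVariables false
@[reducible] noncomputable def coprodDouble (X : ℤ → B) : CochainComplex B ℤ where
  X i := X i ⊞ X (i - 1)
  d i j :=
    if h : i + 1 = j then
      biprod.fst ≫ eqToHom (congrArg X (by omega : i = j - 1)) ≫ biprod.inr
    else 0
  shape i j hij := dif_neg hij
  d_comp_d' i j k hij hjk := by
    obtain rfl : j = i + 1 := hij.symm
    obtain rfl : k = i + 1 + 1 := hjk.symm
    rw [dif_pos rfl, dif_pos rfl]
    simp

lemma coprodDouble_d (X : ℤ → B) (i j : ℤ) (h : i + 1 = j) :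
    (coprodDouble X).d i j =
      biprod.fst ≫ eqToHom (congrArg X (by omega : i = j - 1)) ≫ biprod.inr :=
  dif_pos h

lemma isZero_doubleComplex_X (A : B) (n i : ℤ) (h : ¬(i = n ∨ i = n + 1)) :
    IsZero ((doubleComplex A n).X i) := by
  dsimp [doubleComplex]
  rw [if_neg h]
  exact isZero_zero B

/-- The injection of the `n`-th double complex into the explicit coproduct. -/
noncomputable def doubleInj (X : ℤ → B) (n : ℤ) : doubleComplex (X n) n ⟶ coprodDouble X where
  f i :=
    if h : i = n then
      eqToHom (by dsimp [doubleComplex]; rw [if_pos (Or.inl h), h]) ≫ biprod.inl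
    else if h' : i = n + 1 then
      eqToHom (by dsimp [doubleComplex]; rw [if_pos (Or.inr h')]; congr 1; omega) ≫ biprod.inr
    else 0
  comm' i j hij := by
    obtain rfl : j = i + 1 := hij.symm
    by_cases h : i = n
    · subst h
      dsimp [doubleComplex, coprodDouble]
      rw [dif_pos rfl, dif_pos rfl, dif_pos (⟨rfl, rfl⟩ : i = i ∧ i + 1 = i + 1),
        dif_neg (show ¬i + 1 = i by omega)]
      simp
      exact (eqToHom_trans_assoc _ _ _).trans (eqToHom_trans_assoc _ _ _).symm
    · have h2 : ¬ (i = n ∧ i + 1 = n + 1) := by rintro ⟨rfl, -⟩; exact h rfl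
      dsimp [doubleComplex, coprodDouble]
      rw [dif_neg h2, dif_neg h, zero_comp]
      by_cases h' : i = n + 1
      · subst h'
        simp
      · simp [h']
        exact zero_comp

noncomputable def coprodCofan (X : ℤ → B) : Cofan (fun n => doubleComplex (X n) n) :=
  Cofan.mk (coprodDouble X) (doubleInj X)

variable (X : ℤ → B)

/-- Extract, from a cofan on the double complexes, the component map `X n ⟶ t.pt.X n`. -/
noncomputable def cofanA (t : Cofan fun n => doubleComplex (X n) n) (n : ℤ) :
    X n ⟶ t.pt.X n :=
  eqToHom (show X n = (doubleComplex (X n) n).X n by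
    dsimp [doubleComplex]; rw [if_pos (Or.inl rfl)]) ≫ (t.inj n).f n

lemma cofanA_d (t : Cofan fun n => doubleComplex (X n) n) {m k : ℤ} (r : ℤ) (hmk : m = k) :
    eqToHom (congrArg X hmk) ≫ cofanA X t k ≫ t.pt.d k r = cofanA X t m ≫ t.pt.d m r := by
  subst hmk; simp

lemma cofan_inj_f_succ (t : Cofan fun n => doubleComplex (X n) n) (n i : ℤ) (h : n + 1 = i) :
    (t.inj n).f i = eqToHom (show (doubleComplex (X n) n).X i = X n by
        dsimp [doubleComplex]; rw [if_pos (Or.inr h.symm)]) ≫ cofanA X t n ≫ t.pt.d n i := by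
  subst h
  have hc := (t.inj n).comm' n (n + 1) rfl
  dsimp [doubleComplex] at hc
  rw [dif_pos ⟨rfl, rfl⟩] at hc
  dsimp [cofanA]
  simp only [Category.assoc, hc]
  simp
  simp [doubleComplex]
  exact ((eqToHom_trans_assoc _ _ _).trans (by rw [eqToHom_refl, Category.id_comp])).symm

noncomputable def coprodDesc (t : Cofan fun n => doubleComplex (X n) n) :
    coprodDouble X ⟶ t.pt where
  f i := biprod.desc (cofanA X t i) (cofanA X t (i - 1) ≫ t.pt.d (i - 1) i)
  comm' i j hij := by
    obtain rfl : j = i + 1 := hij.symm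
    rw [coprodDouble_d X i (i + 1) rfl]
    apply biprod.hom_ext'
    · simp [cofanA_d X t (i + 1) (show i = i + 1 - 1 by omega)]
    · simp

lemma coprod_fac (t : Cofan fun n => doubleComplex (X n) n) (n : ℤ) :
    doubleInj X n ≫ coprodDesc X t = t.inj n := by
  ext i
  by_cases h : i = n
  · subst h
    dsimp [doubleInj, coprodDesc]
    rw [dif_pos rfl]
    simp [cofanA]
  · by_cases h' : i = n + 1
    · subst h'
      dsimp [doubleInj, coprodDesc]
      rw [dif_neg h, dif_pos rfl]
      rw [cofan_inj_f_succ X t n (n + 1) rfl]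
      simp only [Category.assoc, biprod.inr_desc]
      rw [← cofanA_d X t (n + 1) (show n + 1 - 1 = n by omega)]
      simp [eqToHom_trans_assoc]
    · apply (isZero_doubleComplex_X (X n) n i (by tauto)).eq_of_src

lemma coprod_uniq (t : Cofan fun n => doubleComplex (X n) n) (m : coprodDouble X ⟶ t.pt)
    (hm : ∀ n, doubleInj X n ≫ m = t.inj n) : m = coprodDesc X t := by
  ext i
  · have := congrArg (fun q => HomologicalComplex.Hom.f q i) (hm i)
    dsimp [doubleInj] at this
    rw [dif_pos rfl] at this
    dsimp [coprodDesc]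
    rw [biprod.inl_desc]
    dsimp [cofanA]
    rw [← this]
    simp
  · have := congrArg (fun q => HomologicalComplex.Hom.f q i) (hm (i - 1))
    dsimp [doubleInj] at this
    rw [dif_neg (by omega), dif_pos (by omega : i = (i - 1) + 1)] at this
    dsimp [coprodDesc]
    rw [biprod.inr_desc]
    rw [cofan_inj_f_succ X t (i - 1) i (by omega)] at this
    rw [Category.assoc, eqToHom_comp_iff] at this
    rw [this]
    simp

noncomputable def isColimitCoprodCofan : IsColimit (coprodCofan X) :=
  mkCofanColimit _ (fun t => coprodDesc X t) (fun t n => coprod_fac X t n)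
    (fun t m hm => coprod_uniq X t m hm)
/-- The contracting homotopy of `coprodDouble X`. -/
noncomputable def coprodDoubleHomotopy (X : ℤ → B) :
    Homotopy (𝟙 (coprodDouble X)) 0 where
  hom i j :=
    if h : j + 1 = i then
      biprod.snd ≫ eqToHom (congrArg X (by omega : i - 1 = j)) ≫ biprod.inl
    else 0
  zero i j h := dif_neg h
  comm i := by
    rw [dNext_eq _ (show (ComplexShape.up ℤ).Rel i (i+1) by simp),
      prevD_eq _ (show (ComplexShape.up ℤ).Rel (i-1) i by simp only [ComplexShape.up_Rel]; omega)]
    rw [coprodDouble_d X i (i+1) rfl, coprodDouble_d X (i-1) i (by omega),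
      dif_pos rfl, dif_pos (by omega : (i - 1) + 1 = i)]
    simp

section HomotopyAlgebra

variable (Y : CochainComplex B ℤ) (h : Homotopy (𝟙 Y) (0 : Y ⟶ Y))

/-- The degreewise idempotent `d ≫ h` attached to a contraction of `Y`. -/
noncomputable def Ee (i : ℤ) : Y.X i ⟶ Y.X i := Y.d i (i + 1) ≫ h.hom (i + 1) i

lemma sum_eq (i j : ℤ) (hij : i + 1 = j) :
    𝟙 (Y.X j) = Ee Y h j + h.hom j i ≫ Y.d i j := by
  have hc := h.comm j
  rw [dNext_eq h.hom (show (ComplexShape.up ℤ).Rel j (j + 1) by simp),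
    prevD_eq h.hom (show (ComplexShape.up ℤ).Rel i j by simpa using hij)] at hc
  simpa [Ee] using hc

lemma hd_eq (i j : ℤ) (hij : i + 1 = j) :
    h.hom j i ≫ Y.d i j = 𝟙 (Y.X j) - Ee Y h j := by
  rw [sum_eq Y h i j hij]; abel

lemma d_Ee (i j : ℤ) (hij : i + 1 = j) : Y.d i j ≫ Ee Y h j = 0 := by
  dsimp [Ee]
  rw [← Category.assoc, Y.d_comp_d, zero_comp]

lemma Ee_idem (i : ℤ) : Ee Y h i ≫ Ee Y h i = Ee Y h i := by
  dsimp only [Ee]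
  rw [Category.assoc, ← Category.assoc (h.hom (i + 1) i), hd_eq Y h i (i + 1) rfl]
  simp only [Preadditive.sub_comp, Preadditive.comp_sub, Category.id_comp]
  rw [reassoc_of% (d_Ee Y h i (i + 1) rfl)]
  simp [Ee]

lemma Ee_d (i j : ℤ) (hij : i + 1 = j) : Ee Y h i ≫ Y.d i j = Y.d i j := by
  obtain rfl : j = i + 1 := hij.symm
  dsimp only [Ee]
  rw [Category.assoc, hd_eq Y h i (i + 1) rfl]
  simp only [Preadditive.comp_sub, Category.comp_id]
  rw [d_Ee Y h i (i + 1) rfl, sub_zero]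

/-- The improved contracting homotopy, satisfying `E ≫ H = 0`. -/
noncomputable def Hh (i j : ℤ) : Y.X i ⟶ Y.X j := (𝟙 (Y.X i) - Ee Y h i) ≫ h.hom i j

lemma Ee_Hh (i j : ℤ) : Ee Y h i ≫ Hh Y h i j = 0 := by
  dsimp only [Hh]
  rw [← Category.assoc]
  simp only [Preadditive.comp_sub, Category.comp_id, Ee_idem, sub_self, zero_comp]

lemma d_Hh (i j : ℤ) (hij : i + 1 = j) : Y.d i j ≫ Hh Y h j i = Ee Y h i := by
  obtain rfl : j = i + 1 := hij.symm
  dsimp only [Hh]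
  rw [← Category.assoc]
  simp only [Preadditive.comp_sub, Category.comp_id]
  rw [d_Ee Y h i (i + 1) rfl, sub_zero]
  rfl

lemma Hh_d (i j : ℤ) (hij : i + 1 = j) : Hh Y h j i ≫ Y.d i j = 𝟙 (Y.X j) - Ee Y h j := by
  dsimp only [Hh]
  rw [Category.assoc, hd_eq Y h i j hij]
  simp only [Preadditive.sub_comp, Preadditive.comp_sub, Category.id_comp, Category.comp_id]
  rw [Ee_idem, sub_self, sub_zero]

end HomotopyAlgebra

section Splitting

variable [IsIdempotentComplete B] (Y : CochainComplex B ℤ) (h : Homotopy (𝟙 Y) (0 : Y ⟶ Y))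

lemma exSplit (i : ℤ) : ∃ (S : B) (σ : S ⟶ Y.X i) (ρ : Y.X i ⟶ S),
    σ ≫ ρ = 𝟙 S ∧ ρ ≫ σ = Ee Y h i :=
  IsIdempotentComplete.idempotents_split (Y.X i) (Ee Y h i) (Ee_idem Y h i)

noncomputable def Sobj (i : ℤ) : B := (exSplit Y h i).choose

noncomputable def σm (i : ℤ) : Sobj Y h i ⟶ Y.X i := (exSplit Y h i).choose_spec.choose

noncomputable def ρm (i : ℤ) : Y.X i ⟶ Sobj Y h i :=
  (exSplit Y h i).choose_spec.choose_spec.choose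

lemma σρ (i : ℤ) : σm Y h i ≫ ρm Y h i = 𝟙 (Sobj Y h i) :=
  (exSplit Y h i).choose_spec.choose_spec.choose_spec.1

lemma ρσ (i : ℤ) : ρm Y h i ≫ σm Y h i = Ee Y h i :=
  (exSplit Y h i).choose_spec.choose_spec.choose_spec.2

lemma σE (i : ℤ) : σm Y h i ≫ Ee Y h i = σm Y h i := by
  rw [← ρσ, ← Category.assoc, σρ, Category.id_comp]

lemma Eρ (i : ℤ) : Ee Y h i ≫ ρm Y h i = ρm Y h i := by
  rw [← ρσ, Category.assoc, σρ, Category.comp_id]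

noncomputable def ψm (i : ℤ) : (Sobj Y h i) ⊞ (Sobj Y h (i - 1)) ⟶ Y.X i :=
  biprod.desc (σm Y h i) (σm Y h (i - 1) ≫ Y.d (i - 1) i)

noncomputable def φm (i : ℤ) : Y.X i ⟶ (Sobj Y h i) ⊞ (Sobj Y h (i - 1)) :=
  biprod.lift (ρm Y h i) (Hh Y h i (i - 1) ≫ ρm Y h (i - 1))

lemma ψφ (i : ℤ) : ψm Y h i ≫ φm Y h i = 𝟙 _ := by
  apply biprod.hom_ext'
  · apply biprod.hom_ext
    · simp [ψm, φm, σρ]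
    · simp only [ψm, φm, biprod.inl_desc_assoc, Category.assoc, biprod.lift_snd,
        biprod.inl_fst, biprod.inl_snd, Category.comp_id]
      rw [← σE, Category.assoc, reassoc_of% (Ee_Hh Y h i (i - 1))]
      simp
  · apply biprod.hom_ext
    · simp only [ψm, φm, biprod.inr_desc_assoc, Category.assoc, biprod.lift_fst,
        biprod.inr_fst, biprod.inr_snd, Category.comp_id]
      rw [← Eρ, ← Category.assoc (Y.d (i-1) i), d_Ee Y h (i - 1) i (by omega)]
      simp
    · simp only [ψm, φm, biprod.inr_desc_assoc, Category.assoc, biprod.lift_snd,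
        biprod.inr_snd, Category.comp_id]
      rw [reassoc_of% (d_Hh Y h (i - 1) i (by omega)), Eρ, σρ]

lemma φψ (i : ℤ) : φm Y h i ≫ ψm Y h i = 𝟙 (Y.X i) := by
  dsimp only [φm, ψm]
  rw [biprod.lift_desc, ρσ]
  rw [Category.assoc, reassoc_of% (ρσ Y h (i - 1)), Ee_d Y h (i - 1) i (by omega),
    Hh_d Y h (i - 1) i (by omega)]
  abel

end Splitting

section Main

variable [IsIdempotentComplete B] (Y : CochainComplex B ℤ) (h : Homotopy (𝟙 Y) (0 : Y ⟶ Y))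

lemma σm_d (r : ℤ) {m k : ℤ} (hmk : m = k) :
    eqToHom (congrArg (Sobj Y h) hmk) ≫ σm Y h k ≫ Y.d k r = σm Y h m ≫ Y.d m r := by
  subst hmk; simp

/-- The isomorphism between the explicit coproduct of double complexes and `Y`. -/
noncomputable def contractIso : coprodDouble (Sobj Y h) ≅ Y :=
  HomologicalComplex.Hom.isoOfComponents
    (fun i => ⟨ψm Y h i, φm Y h i, ψφ Y h i, φψ Y h i⟩)
    (fun i j hij => by
      obtain rfl : j = i + 1 := hij.symm
      dsimp only
      rw [dif_pos rfl]
      apply biprod.hom_ext'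
      · simp only [ψm, biprod.inl_desc_assoc, Category.assoc, biprod.inl_fst_assoc]
        rw [biprod.inr_desc]
        exact (σm_d Y h (i + 1) (show i = i + 1 - 1 by omega)).symm
      · simp [ψm])

end Main

theorem contractible_iff_iso_coproduct_of_doubles [IsIdempotentComplete B]
    (Y : CochainComplex B ℤ) :
    Limits.IsZero ((HomotopyCategory.quotient B (ComplexShape.up ℤ)).obj Y) ↔
      ∃ (X : ℤ → B) (c : Cofan fun n : ℤ => doubleComplex (X n) n) (_ : IsColimit c),
        Nonempty (Y ≅ c.pt) := by
  rw [HomotopyCategory.isZero_quotient_obj_iff]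
  constructor
  · rintro ⟨h⟩
    exact ⟨Sobj Y h, coprodCofan (Sobj Y h), isColimitCoprodCofan (Sobj Y h),
      ⟨(contractIso Y h).symm⟩⟩
  · rintro ⟨X, c, hc, ⟨e⟩⟩
    have e2 : c.pt ≅ coprodDouble X :=
      hc.coconePointUniqueUpToIso (isColimitCoprodCofan X)
    have hz : IsZero ((HomotopyCategory.quotient B (ComplexShape.up ℤ)).obj (coprodDouble X)) := by
      rw [HomotopyCategory.isZero_quotient_obj_iff]
      exact ⟨coprodDoubleHomotopy X⟩
    rw [← HomotopyCategory.isZero_quotient_obj_iff]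
    exact hz.of_iso ((HomotopyCategory.quotient B (ComplexShape.up ℤ)).mapIso (e ≪≫ e2))
end

section
/- Let κ be an uncountable regular cardinal and B an additive category with κ-coproducts (coproducts with fewer than κ summands). If the homotopy category K(B) is generated as a κ-localizing subcategory of itself by a set S of fewer than κ objects, then there is an object X ∈ B such that every object of B is a direct summand of a κ-coproduct of copies of X. -/
namespace LocWellGen

open CategoryTheory CategoryTheory.Limits CategoryTheory.Pretriangulated ZeroObject

universe v u

variable (T : Type u) [Category.{v} T] [HasZeroObject T] [HasShift T ℤ]
  [Preadditive T] [∀ n : ℤ, (shiftFunctor T n).Additive] [Pretriangulated T]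

/-- A localizing subcategory of a pretriangulated category, given as a class of objects:
a full triangulated subcategory closed under isomorphisms and (existing) coproducts. -/
structure IsLocalizing (L : Set T) : Prop where
  zero : (0 : T) ∈ L
  isoClosed : ∀ {X Y : T}, (X ≅ Y) → X ∈ L → Y ∈ L
  shiftClosed : ∀ (X : T) (n : ℤ), X ∈ L → X⟦n⟧ ∈ L
  ext₂ : ∀ D ∈ distTriang T, D.obj₁ ∈ L → D.obj₃ ∈ L → D.obj₂ ∈ L
  coproductClosed : ∀ {I : Type v} (X : I → T), (∀ i, X i ∈ L) →
    ∀ (c : Cofan X), IsColimit c → c.pt ∈ L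

/-- `Loc S` : the smallest localizing subcategory containing `S`. -/
def Loc (S : Set T) : Set T := ⋂₀ {L : Set T | IsLocalizing T L ∧ S ⊆ L}

/-- `Y` is `κ`-small: any morphism from `Y` to a coproduct (of objects of `L`) factors
through a subcoproduct with fewer than `κ` summands. -/
def IsKappaSmall (L : Set T) (κ : Cardinal.{v}) (Y : T) : Prop :=
  ∀ {I : Type v} (X : I → T), (∀ i, X i ∈ L) →
    ∀ (c : Cofan X), IsColimit c → ∀ f : Y ⟶ c.pt,
      ∃ (J : Set I) (c' : Cofan fun j : J => X j) (hc' : IsColimit c') (g : Y ⟶ c'.pt),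
        Cardinal.mk J < κ ∧
        f = g ≫ hc'.desc (Cofan.mk c.pt fun j : J => c.inj j.1)

/-- Condition (3) of well generation: every morphism from `Y` to a coproduct of a family
in `L` factors through a coproduct of objects of `S` via a coproduct of morphisms. -/
def FactorsThroughFamily (L S : Set T) (Y : T) : Prop :=
  ∀ {I : Type v} (X : I → T), (∀ i, X i ∈ L) →
    ∀ (c : Cofan X), IsColimit c → ∀ f : Y ⟶ c.pt,
      ∃ (Z : I → T) (_ : ∀ i, Z i ∈ S) (φ : ∀ i, Z i ⟶ X i)
        (cz : Cofan Z) (hcz : IsColimit cz) (g : Y ⟶ cz.pt),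
        f = g ≫ hcz.desc (Cofan.mk c.pt fun i => φ i ≫ c.inj i)

/-- The set `S` witnesses that the (localizing sub)category `L` is `κ`-well generated. -/
structure GeneratesWell (L : Set T) (κ : Cardinal.{v}) (S : Set T) : Prop where
  subset : S ⊆ L
  isSmall : Small.{v} ↥S
  nondegenerate : ∀ X ∈ L, (∀ Y ∈ S, ∀ f : Y ⟶ X, f = 0) → IsZero X
  kappaSmall : ∀ Y ∈ S, IsKappaSmall T L κ Y
  factors : ∀ Y ∈ S, FactorsThroughFamily T L S Y

/-- `L` is a `κ`-well generated (localizing sub)category. -/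
def IsWellGeneratedOfCard (L : Set T) (κ : Cardinal.{v}) : Prop :=
  κ.IsRegular ∧ ∃ S : Set T, GeneratesWell T L κ S

/-- `L` is a well generated (localizing sub)category. -/
def IsWellGeneratedSubcat (L : Set T) : Prop :=
  ∃ κ : Cardinal.{v}, IsWellGeneratedOfCard T L κ

/-- compactly generated = `ℵ₀`-well generated -/
def IsCompactlyGeneratedSubcat (L : Set T) : Prop :=
  IsWellGeneratedOfCard T L Cardinal.aleph0

/-- The whole category `T` is well generated. -/
abbrev IsWellGenerated : Prop := IsWellGeneratedSubcat T Set.univ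

/-- A localizing subcategory `L` is locally well generated if the localizing subcategory
generated by any set of its objects is well generated. -/
def IsLocallyWellGeneratedSubcat (L : Set T) : Prop :=
  ∀ S : Set T, S ⊆ L → Small.{v} ↥S → IsWellGeneratedSubcat T (Loc T S)

/-- `T` is locally well generated. -/
abbrev IsLocallyWellGenerated : Prop := IsLocallyWellGeneratedSubcat T Set.univ

/-- `Y` is a retract (direct summand) of `X`. -/
def IsRetractOf {B : Type*} [Category B] (Y X : B) : Prop :=
  ∃ (s : Y ⟶ X) (r : X ⟶ Y), s ≫ r = 𝟙 Y

end LocWellGen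

namespace LocWellGen

open CategoryTheory CategoryTheory.Limits

universe v u
/-- An additive category with arbitrary coproducts is pure semisimple if it has an
additive generator: `B = Add X` for some `X`, i.e. every object is a direct summand
of a coproduct of copies of `X`. -/
def IsPureSemisimple (B : Type u) [Category.{v} B] : Prop :=
  ∃ X : B, ∀ Y : B, ∃ (I : Type v) (c : Cofan fun _ : I => X) (_ : IsColimit c),
    IsRetractOf Y c.pt

end LocWellGen

namespace LocWellGen

open CategoryTheory CategoryTheory.Limits CategoryTheory.Pretriangulated ZeroObject

universe v u

variable (T : Type u) [Category.{v} T] [HasZeroObject T] [HasShift T ℤ]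
  [Preadditive T] [∀ n : ℤ, (shiftFunctor T n).Additive] [Pretriangulated T]

/-- A `κ`-localizing subcategory: a thick subcategory closed under `κ`-coproducts
(coproducts with fewer than `κ` summands). -/
structure IsKappaLocalizing (κ : Cardinal.{v}) (L : Set T) : Prop where
  zero : (0 : T) ∈ L
  isoClosed : ∀ {X Y : T}, (X ≅ Y) → X ∈ L → Y ∈ L
  summandClosed : ∀ {X Y : T}, IsRetractOf Y X → X ∈ L → Y ∈ L
  shiftClosed : ∀ (X : T) (n : ℤ), X ∈ L → X⟦n⟧ ∈ L
  ext₂ : ∀ D ∈ distTriang T, D.obj₁ ∈ L → D.obj₃ ∈ L → D.obj₂ ∈ L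
  coproductClosed : ∀ {I : Type v} (X : I → T), Cardinal.mk I < κ → (∀ i, X i ∈ L) →
    ∀ (c : Cofan X), IsColimit c → c.pt ∈ L

/-- The smallest `κ`-localizing subcategory containing `S`. -/
def KLoc (κ : Cardinal.{v}) (S : Set T) : Set T :=
  ⋂₀ {L : Set T | IsKappaLocalizing T κ L ∧ S ⊆ L}


section AuxRetract

variable {C : Type*} [Category C]

lemma IsRetractOf.refl (X : C) : IsRetractOf X X := ⟨𝟙 X, 𝟙 X, by simp⟩

lemma IsRetractOf.out {X Y : C} (h : IsRetractOf X Y) :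
    ∃ (s : X ⟶ Y) (r : Y ⟶ X), s ≫ r = 𝟙 X := h

lemma IsRetractOf.trans {X Y Z : C} (h₁ : IsRetractOf X Y) (h₂ : IsRetractOf Y Z) :
    IsRetractOf X Z := by
  obtain ⟨s₁, r₁, hh₁⟩ := h₁.out
  obtain ⟨s₂, r₂, hh₂⟩ := h₂.out
  exact ⟨s₁ ≫ s₂, r₂ ≫ r₁, by
    rw [Category.assoc, ← Category.assoc s₂, hh₂, Category.id_comp, hh₁]⟩

lemma IsRetractOf.of_iso {X Y : C} (e : X ≅ Y) : IsRetractOf X Y :=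
  ⟨e.hom, e.inv, e.hom_inv_id⟩

lemma IsRetractOf.map {D : Type*} [Category D] {X Y : C} (h : IsRetractOf X Y) (F : C ⥤ D) :
    IsRetractOf (F.obj X) (F.obj Y) := by
  obtain ⟨s, r, hsr⟩ := h.out
  exact ⟨F.map s, F.map r, by rw [← F.map_comp, hsr, F.map_id]⟩

lemma retract_pt {I : Type*} {f g : I → C}
    {c : Cofan f} (hc : IsColimit c) {c' : Cofan g} (hc' : IsColimit c')
    (h : ∀ i, IsRetractOf (f i) (g i)) : IsRetractOf c.pt c'.pt := by
  choose s r hsr using fun i => (h i).out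
  refine ⟨Cofan.IsColimit.desc hc (fun i => s i ≫ c'.inj i),
    Cofan.IsColimit.desc hc' (fun i => r i ≫ c.inj i), ?_⟩
  apply Cofan.IsColimit.hom_ext hc
  intro i
  rw [← Category.assoc, Cofan.IsColimit.fac, Category.assoc, Cofan.IsColimit.fac,
    ← Category.assoc, hsr, Category.id_comp, Category.comp_id]

end AuxRetract

section AuxAddK

variable {B : Type u} [Category.{v} B]

/-- Objects that are retracts of `κ`-coproducts of copies of `X`. -/
def AddK (κ : Cardinal.{v}) (X : B) : Set B :=
  {Y | ∃ (I : Type v) (_ : Cardinal.mk I < κ) (c : Cofan fun _ : I => X) (_ : IsColimit c),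
    IsRetractOf Y c.pt}

variable {κ : Cardinal.{v}} {X : B}

lemma AddK.of_retract {Y Z : B} (h : IsRetractOf Y Z) (hZ : Z ∈ AddK κ X) : Y ∈ AddK κ X := by
  obtain ⟨I, hI, c, hc, hr⟩ := hZ
  exact ⟨I, hI, c, hc, h.trans hr⟩

lemma AddK.of_iso {Y Z : B} (e : Y ≅ Z) (hZ : Z ∈ AddK κ X) : Y ∈ AddK κ X :=
  AddK.of_retract (IsRetractOf.of_iso e) hZ

lemma AddK.self_mem (hκ : (1 : Cardinal.{v}) < κ)
    (h1B : HasColimitsOfShape (Discrete PUnit.{v+1}) B) : X ∈ AddK κ X := by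
  refine ⟨PUnit, by simpa using hκ, colimit.cocone _, colimit.isColimit _,
    ?_⟩
  refine ⟨Cofan.inj (colimit.cocone (Discrete.functor (fun _ : PUnit.{v+1} => X))) PUnit.unit,
    Cofan.IsColimit.desc (colimit.isColimit (Discrete.functor (fun _ : PUnit.{v+1} => X)))
      (fun _ => 𝟙 X), ?_⟩
  exact Cofan.IsColimit.fac (colimit.isColimit (Discrete.functor (fun _ : PUnit.{v+1} => X)))
    (fun _ => 𝟙 X) PUnit.unit

lemma AddK.zero_mem [Preadditive B] [HasZeroObject B] (hκ : (1 : Cardinal.{v}) < κ)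
    (h1B : HasColimitsOfShape (Discrete PUnit.{v+1}) B) : (0 : B) ∈ AddK κ X :=
  AddK.of_retract ⟨0, 0, by simp⟩ (AddK.self_mem hκ h1B)

lemma AddK.cofan_mem (hreg : κ.IsRegular)
    (hB : ∀ (I : Type v), Cardinal.mk I < κ → HasColimitsOfShape (Discrete I) B)
    {I : Type v} (hI : Cardinal.mk I < κ) {G : I → B} (hG : ∀ i, G i ∈ AddK κ X)
    (c : Cofan G) (hc : IsColimit c) : c.pt ∈ AddK κ X := by
  choose J hJ cf hcf hret using hG
  choose s r hsr using fun i => (hret i).out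
  have hcard : Cardinal.mk (Σ i, J i) < κ := by
    rw [Cardinal.mk_sigma]
    exact Cardinal.sum_lt_of_isRegular hreg hI hJ
  haveI := hB (Σ i, J i) hcard
  refine ⟨Σ i, J i, hcard, colimit.cocone _, colimit.isColimit _, ?_⟩
  set big : Cofan (fun _ : Σ i, J i => X) := colimit.cocone _ with hbigdef
  have hbig : IsColimit big := colimit.isColimit _
  refine ⟨Cofan.IsColimit.desc hc (fun i => s i ≫ Cofan.IsColimit.desc (hcf i)
      (fun j => big.inj ⟨i, j⟩)),
    Cofan.IsColimit.desc hbig (fun p => (cf p.1).inj p.2 ≫ r p.1 ≫ c.inj p.1), ?_⟩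
  apply Cofan.IsColimit.hom_ext hc
  intro i
  rw [← Category.assoc, Cofan.IsColimit.fac, Category.comp_id, Category.assoc]
  have hmid : Cofan.IsColimit.desc (hcf i) (fun j => big.inj ⟨i, j⟩) ≫
      Cofan.IsColimit.desc hbig (fun p => (cf p.1).inj p.2 ≫ r p.1 ≫ c.inj p.1)
      = r i ≫ c.inj i := by
    apply Cofan.IsColimit.hom_ext (hcf i)
    intro j
    rw [← Category.assoc, Cofan.IsColimit.fac, Cofan.IsColimit.fac]
  rw [hmid, ← Category.assoc, hsr, Category.id_comp]

lemma AddK.biprod_mem [Preadditive B] [HasBinaryBiproducts B]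
    (hℵ : Cardinal.aleph0 ≤ κ)
    (hB : ∀ (I : Type v), Cardinal.mk I < κ → HasColimitsOfShape (Discrete I) B)
    {P P' : B} (hP : P ∈ AddK κ X) (hP' : P' ∈ AddK κ X) : (P ⊞ P') ∈ AddK κ X := by
  obtain ⟨I, hI, cI, hcI, hrI⟩ := hP
  obtain ⟨J, hJ, cJ, hcJ, hrJ⟩ := hP'
  obtain ⟨sI, rI, hsI⟩ := hrI.out
  obtain ⟨sJ, rJ, hsJ⟩ := hrJ.out
  have hcard : Cardinal.mk (I ⊕ J) < κ := by
    rw [Cardinal.mk_sum, Cardinal.lift_id, Cardinal.lift_id]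
    exact Cardinal.add_lt_of_lt hℵ hI hJ
  haveI := hB (I ⊕ J) hcard
  refine ⟨I ⊕ J, hcard, colimit.cocone _, colimit.isColimit _, ?_⟩
  set big : Cofan (fun _ : I ⊕ J => X) := colimit.cocone _ with hbigdef
  have hbig : IsColimit big := colimit.isColimit _
  refine ⟨biprod.desc (sI ≫ Cofan.IsColimit.desc hcI (fun i => big.inj (Sum.inl i)))
      (sJ ≫ Cofan.IsColimit.desc hcJ (fun j => big.inj (Sum.inr j))),
    Cofan.IsColimit.desc hbig (fun p => Sum.rec
      (fun i => cI.inj i ≫ rI ≫ biprod.inl) (fun j => cJ.inj j ≫ rJ ≫ biprod.inr) p), ?_⟩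
  have hI' : Cofan.IsColimit.desc hcI (fun i => big.inj (Sum.inl i)) ≫
      Cofan.IsColimit.desc hbig (fun p => Sum.rec
        (fun i => cI.inj i ≫ rI ≫ biprod.inl) (fun j => cJ.inj j ≫ rJ ≫ biprod.inr) p)
      = rI ≫ biprod.inl := by
    apply Cofan.IsColimit.hom_ext hcI
    intro i
    rw [← Category.assoc, Cofan.IsColimit.fac, Cofan.IsColimit.fac]
  have hJ' : Cofan.IsColimit.desc hcJ (fun j => big.inj (Sum.inr j)) ≫
      Cofan.IsColimit.desc hbig (fun p => Sum.rec
        (fun i => cI.inj i ≫ rI ≫ biprod.inl) (fun j => cJ.inj j ≫ rJ ≫ biprod.inr) p)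
      = rJ ≫ biprod.inr := by
    apply Cofan.IsColimit.hom_ext hcJ
    intro j
    rw [← Category.assoc, Cofan.IsColimit.fac, Cofan.IsColimit.fac]
  apply biprod.hom_ext'
  · rw [biprod.inl_desc_assoc, Category.assoc, hI', ← Category.assoc, hsI,
      Category.id_comp, Category.comp_id]
  · rw [biprod.inr_desc_assoc, Category.assoc, hJ', ← Category.assoc, hsJ,
      Category.id_comp, Category.comp_id]

end AuxAddK

section AuxHomotopy

variable {B : Type u} [Category.{v} B] [Preadditive B]

/-- The cofan obtained by evaluating a coproduct of complexes in a given degree is a colimit. -/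
noncomputable def evalCofanIsColimit {I : Type v}
    [HasColimitsOfShape (Discrete I) B] (N : I → CochainComplex B ℤ) (n : ℤ) :
    IsColimit (Cofan.mk ((colimit (Discrete.functor N)).X n)
      (fun i => (colimit.ι (Discrete.functor N) ⟨i⟩).f n)) := by
  have h := isColimitOfPreserves (HomologicalComplex.eval B (ComplexShape.up ℤ) n)
    (colimit.isColimit (Discrete.functor N))
  refine IsColimit.ofIsoColimit ((IsColimit.precomposeHomEquiv
    (Discrete.natIso (fun i => Iso.refl ((N i.as).X n)))
    ((HomologicalComplex.eval B (ComplexShape.up ℤ) n).mapCocone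
      (colimit.cocone (Discrete.functor N)))).symm h)
    (Cocones.ext (Iso.refl _) ?_)
  rintro ⟨i⟩
  exact (Category.comp_id _).trans (Category.id_comp _)

/-- The quotient functor to the homotopy category preserves coproducts of complexes. -/
noncomputable def quotientCofanIsColimit {I : Type v}
    [HasColimitsOfShape (Discrete I) B] (N : I → CochainComplex B ℤ) :
    IsColimit (Cofan.mk
      ((HomotopyCategory.quotient B (ComplexShape.up ℤ)).obj (colimit (Discrete.functor N)))
      (fun i => (HomotopyCategory.quotient B (ComplexShape.up ℤ)).map
        (colimit.ι (Discrete.functor N) ⟨i⟩))) := by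
  refine mkCofanColimit _
    (fun t => (HomotopyCategory.quotient B (ComplexShape.up ℤ)).map
      (colimit.desc (Discrete.functor N)
        (Cofan.mk t.pt.as (fun i =>
          ((HomotopyCategory.quotient B (ComplexShape.up ℤ)).map_surjective (t.inj i)).choose))))
    (fun t i => ?_) (fun t m hm => ?_)
  · show (HomotopyCategory.quotient B (ComplexShape.up ℤ)).map _ ≫
      (HomotopyCategory.quotient B (ComplexShape.up ℤ)).map _ = _
    rw [← Functor.map_comp, colimit.ι_desc]
    exact ((HomotopyCategory.quotient B (ComplexShape.up ℤ)).map_surjective (t.inj i)).choose_spec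
  · obtain ⟨m', hm'⟩ := (HomotopyCategory.quotient B (ComplexShape.up ℤ)).map_surjective m
    have hu : ∀ i, (HomotopyCategory.quotient B (ComplexShape.up ℤ)).map
        ((HomotopyCategory.quotient B (ComplexShape.up ℤ)).map_surjective (t.inj i)).choose
        = t.inj i :=
      fun i => ((HomotopyCategory.quotient B (ComplexShape.up ℤ)).map_surjective
        (t.inj i)).choose_spec
    set u := fun i => ((HomotopyCategory.quotient B
      (ComplexShape.up ℤ)).map_surjective (t.inj i)).choose with hudef
    have h : ∀ i, Homotopy (colimit.ι (Discrete.functor N) ⟨i⟩ ≫ m') (u i) := fun i =>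
      HomotopyCategory.homotopyOfEq _ _ (by
        rw [Functor.map_comp, hm', hu i]
        exact hm i)
    have hfac : ∀ (p q : ℤ) (i : I), (colimit.ι (Discrete.functor N) ⟨i⟩).f p ≫
        Cofan.IsColimit.desc (evalCofanIsColimit N p) (fun j => (h j).hom p q)
        = (h i).hom p q :=
      fun p q i => Cofan.IsColimit.fac (evalCofanIsColimit N p) (fun j => (h j).hom p q) i
    have key : Homotopy m' (colimit.desc (Discrete.functor N) (Cofan.mk t.pt.as u)) := by
      refine
        { hom := fun p q => Cofan.IsColimit.desc (evalCofanIsColimit N p)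
            (fun j => (h j).hom p q)
          zero := fun p q hpq => Cofan.IsColimit.hom_ext (evalCofanIsColimit N p) _ _
            (fun i => by
              show ((colimit.ι (Discrete.functor N) ⟨i⟩).f p ≫
                  Cofan.IsColimit.desc (evalCofanIsColimit N p) fun j => (h j).hom p q)
                = (colimit.ι (Discrete.functor N) ⟨i⟩).f p ≫ 0
              rw [hfac, (h i).zero p q hpq, comp_zero])
          comm := fun p => Cofan.IsColimit.hom_ext (evalCofanIsColimit N p) _ _ (fun i => ?_) }
      have einj : (Cofan.mk ((colimit (Discrete.functor N)).X p)
          (fun i => (colimit.ι (Discrete.functor N) ⟨i⟩).f p)).inj i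
          = (colimit.ι (Discrete.functor N) ⟨i⟩).f p := rfl
      have e1 : (colimit.ι (Discrete.functor N) ⟨i⟩).f p ≫
          dNext p (fun p q => Cofan.IsColimit.desc (evalCofanIsColimit N p)
            (fun j => (h j).hom p q)) = dNext p (h i).hom := by
        rw [dNext_eq _ (show (ComplexShape.up ℤ).Rel p (p+1) by simp),
          dNext_eq (h i).hom (show (ComplexShape.up ℤ).Rel p (p+1) by simp),
          ← Category.assoc, HomologicalComplex.Hom.comm, Category.assoc, hfac]
      have e2 : (colimit.ι (Discrete.functor N) ⟨i⟩).f p ≫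
          prevD p (fun p q => Cofan.IsColimit.desc (evalCofanIsColimit N p)
            (fun j => (h j).hom p q)) = prevD p (h i).hom := by
        rw [prevD_eq _ (show (ComplexShape.up ℤ).Rel (p-1) p by simp),
          prevD_eq (h i).hom (show (ComplexShape.up ℤ).Rel (p-1) p by simp),
          ← Category.assoc, hfac]
      have e3 : (colimit.ι (Discrete.functor N) ⟨i⟩).f p ≫
          (colimit.desc (Discrete.functor N) (Cofan.mk t.pt.as u)).f p = (u i).f p := by
        rw [← HomologicalComplex.comp_f, colimit.ι_desc]
        rfl
      rw [einj, Preadditive.comp_add, Preadditive.comp_add, e1, e2, e3,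
        ← HomologicalComplex.comp_f]
      exact (h i).comm p
    rw [← hm']
    exact HomotopyCategory.eq_of_homotopy _ _ key

end AuxHomotopy

/-- let `κ` be an uncountable regular cardinal and `B` an additive category
with `κ`-coproducts. If `K(B)` is generated as a `κ`-localizing subcategory of itself by a
set of fewer than `κ` objects, then there is `X ∈ B` such that every object of `B` is a
direct summand of a `κ`-coproduct of copies of `X`. -/
theorem add_generator_of_homotopyCategory_kappa_generated
    (κ : Cardinal.{v}) (hreg : κ.IsRegular) (hunc : Cardinal.aleph0 < κ)
    (B : Type u) [Category.{v} B] [Preadditive B] [HasZeroObject B] [HasBinaryBiproducts B]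
    (hB : ∀ (I : Type v), Cardinal.mk I < κ → HasColimitsOfShape (Discrete I) B)
    (ι : Type v) (g : ι → HomotopyCategory B (ComplexShape.up ℤ))
    (hcard : Cardinal.mk ι < κ)
    (hgen : KLoc (HomotopyCategory B (ComplexShape.up ℤ)) κ (Set.range g) = Set.univ) :
    ∃ X : B, ∀ Y : B, ∃ (I : Type v) (_ : Cardinal.mk I < κ)
      (c : Cofan fun _ : I => X) (_ : IsColimit c), IsRetractOf Y c.pt := by
  classical
  have hℵ : Cardinal.aleph0 ≤ κ := hunc.le
  have h1κ : (1 : Cardinal.{v}) < κ := lt_trans Cardinal.one_lt_aleph0 hunc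
  haveI h1B := hB PUnit.{v+1} (by
    rw [Cardinal.mk_punit]
    exact h1κ)
  have hIdx : Cardinal.mk (ι × ULift.{v} ℤ) < κ := by
    rw [Cardinal.mk_prod, Cardinal.lift_id, Cardinal.lift_id, Cardinal.mk_uLift,
      Cardinal.mk_int, Cardinal.lift_aleph0]
    exact Cardinal.mul_lt_of_lt hℵ hcard hunc
  haveI := hB (ι × ULift.{v} ℤ) hIdx
  set F : ι × ULift.{v} ℤ → B := fun p => ((g p.1).as).X p.2.down with hFdef
  set XG : B := colimit (Discrete.functor F) with hXGdef
  have hXmem : XG ∈ AddK κ XG := AddK.self_mem h1κ h1B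
  have hFmem : ∀ p : ι × ULift.{v} ℤ, F p ∈ AddK κ XG := by
    intro p
    refine AddK.of_retract ⟨colimit.ι (Discrete.functor F) ⟨p⟩,
      colimit.desc (Discrete.functor F) (Cofan.mk (F p)
        (fun q => if h : q = p then eqToHom (by rw [h]) else 0)), ?_⟩ hXmem
    rw [colimit.ι_desc]
    simp
  -- the candidate localizing subcategory
  set L : Set (HomotopyCategory B (ComplexShape.up ℤ)) :=
    {W | ∃ N : CochainComplex B ℤ, (∀ n, N.X n ∈ AddK κ XG) ∧
      IsRetractOf W ((HomotopyCategory.quotient B (ComplexShape.up ℤ)).obj N)} with hLdef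
  have hmemL : ∀ W : HomotopyCategory B (ComplexShape.up ℤ), W ∈ L ↔
      ∃ N : CochainComplex B ℤ, (∀ n, N.X n ∈ AddK κ XG) ∧
      IsRetractOf W ((HomotopyCategory.quotient B (ComplexShape.up ℤ)).obj N) :=
    fun W => Iff.rfl
  have hLS : Set.range g ⊆ L := by
    rintro _ ⟨i, rfl⟩
    exact (hmemL _).2 ⟨(g i).as, fun n => hFmem ⟨i, ULift.up n⟩, IsRetractOf.refl (g i)⟩
  -- closure properties
  have hzeroL : (0 : HomotopyCategory B (ComplexShape.up ℤ)) ∈ L := by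
    refine (hmemL _).2 ⟨0, fun n => ?_, ⟨0, 0, by simp⟩⟩
    exact AddK.of_iso (((HomologicalComplex.eval B (ComplexShape.up ℤ) n).map_isZero
      (Limits.isZero_zero _)).isoZero) (AddK.zero_mem h1κ h1B)
  have hisoL : ∀ {W W' : HomotopyCategory B (ComplexShape.up ℤ)}, (W ≅ W') → W ∈ L → W' ∈ L := by
    intro W W' e hW
    obtain ⟨N, hN, hr⟩ := (hmemL _).1 hW
    exact (hmemL _).2 ⟨N, hN, (IsRetractOf.of_iso e.symm).trans hr⟩
  have hsummandL : ∀ {W W' : HomotopyCategory B (ComplexShape.up ℤ)},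
      IsRetractOf W' W → W ∈ L → W' ∈ L := by
    intro W W' h hW
    obtain ⟨N, hN, hr⟩ := (hmemL _).1 hW
    exact (hmemL _).2 ⟨N, hN, h.trans hr⟩
  have hshiftL : ∀ (W : HomotopyCategory B (ComplexShape.up ℤ)) (n : ℤ), W ∈ L → W⟦n⟧ ∈ L := by
    intro W n hW
    obtain ⟨N, hN, hr⟩ := (hmemL _).1 hW
    refine (hmemL _).2 ⟨(CategoryTheory.shiftFunctor (CochainComplex B ℤ) n).obj N,
      fun m => hN (m + n),
      (hr.map (CategoryTheory.shiftFunctor _ n)).trans (IsRetractOf.of_iso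
        ((((HomotopyCategory.quotient B (ComplexShape.up ℤ)).commShiftIso n).app N).symm))⟩
  have hext_key : ∀ T ∈ distTriang (HomotopyCategory B (ComplexShape.up ℤ)),
      T.obj₁ ∈ L → T.obj₂ ∈ L → T.obj₃ ∈ L := by
    intro T hT h1 h2
    obtain ⟨M₁, hM₁, hr₁⟩ := (hmemL _).1 h1
    obtain ⟨M₂, hM₂, hr₂⟩ := (hmemL _).1 h2
    obtain ⟨s₁, r₁, hs₁⟩ : ∃ (s : @Quiver.Hom _ CategoryStruct.toQuiver T.obj₁
        ((HomotopyCategory.quotient B (ComplexShape.up ℤ)).obj M₁))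
      (r : @Quiver.Hom _ CategoryStruct.toQuiver
        ((HomotopyCategory.quotient B (ComplexShape.up ℤ)).obj M₁) T.obj₁), s ≫ r = 𝟙 _ := hr₁
    obtain ⟨s₂, r₂, hs₂⟩ : ∃ (s : @Quiver.Hom _ CategoryStruct.toQuiver T.obj₂
        ((HomotopyCategory.quotient B (ComplexShape.up ℤ)).obj M₂))
      (r : @Quiver.Hom _ CategoryStruct.toQuiver
        ((HomotopyCategory.quotient B (ComplexShape.up ℤ)).obj M₂) T.obj₂), s ≫ r = 𝟙 _ := hr₂
    obtain ⟨f, hf⟩ := (HomotopyCategory.quotient B (ComplexShape.up ℤ)).map_surjective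
      (r₁ ≫ T.mor₁ ≫ s₂)
    have hT' := HomotopyCategory.mappingCone_triangleh_distinguished f
    have hmor : (CochainComplex.mappingCone.triangleh f).mor₁ =
      (HomotopyCategory.quotient B (ComplexShape.up ℤ)).map f := rfl
    obtain ⟨φ, hφ₁, hφ₂⟩ := Pretriangulated.complete_distinguished_triangle_morphism
      T (CochainComplex.mappingCone.triangleh f) hT hT' s₁ s₂
      (by erw [hmor, hf, ← Category.assoc, hs₁, Category.id_comp]; rfl)
    obtain ⟨ψ, hψ₁, hψ₂⟩ := Pretriangulated.complete_distinguished_triangle_morphism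
      (CochainComplex.mappingCone.triangleh f) T hT' hT r₁ r₂
      (by erw [hmor, hf, Category.assoc, Category.assoc, hs₂, Category.comp_id])
    have hiso : IsIso (φ ≫ ψ) := by
      refine Pretriangulated.isIso₃_of_isIso₁₂
        { hom₁ := 𝟙 T.obj₁, hom₂ := 𝟙 T.obj₂, hom₃ := φ ≫ ψ,
          comm₁ := by simp,
          comm₂ := by
            erw [← Category.assoc, hφ₁, Category.assoc, hψ₁, ← Category.assoc, hs₂],
          comm₃ := by
            erw [CategoryTheory.Functor.map_id, Category.comp_id, Category.assoc, ← hψ₂,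
              ← Category.assoc, ← hφ₂, Category.assoc, ← Functor.map_comp, hs₁,
              CategoryTheory.Functor.map_id, Category.comp_id] }
        hT hT ?_ ?_
      · dsimp
        infer_instance
      · dsimp
        infer_instance
    refine (hmemL _).2 ⟨CochainComplex.mappingCone f, fun n => ?_, φ,
      ψ ≫ CategoryTheory.inv (φ ≫ ψ), by
        exact (Category.assoc φ ψ _).symm.trans (IsIso.hom_inv_id (φ ≫ ψ))⟩
    exact AddK.of_iso (HomologicalComplex.homotopyCofiber.XIsoBiprod f n (n+1) (by simp))
      (AddK.biprod_mem hℵ hB (hM₁ (n+1)) (hM₂ n))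
  have hextL : ∀ D ∈ distTriang (HomotopyCategory B (ComplexShape.up ℤ)),
      D.obj₁ ∈ L → D.obj₃ ∈ L → D.obj₂ ∈ L := by
    intro D hD hD1 hD3
    exact hext_key D.invRotate (inv_rot_of_distTriang D hD)
      (hshiftL D.obj₃ (-1) hD3) hD1
  have hcoprodL : ∀ {I : Type v} (Xf : I → HomotopyCategory B (ComplexShape.up ℤ)),
      Cardinal.mk I < κ → (∀ i, Xf i ∈ L) →
      ∀ (c : Cofan Xf), IsColimit c → c.pt ∈ L := by
    intro I Xf hIc hXf c hc
    haveI := hB I hIc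
    have hXf' := fun i => (hmemL _).1 (hXf i)
    choose N hN hret using hXf'
    have hq := quotientCofanIsColimit N
    refine (hmemL _).2 ⟨colimit (Discrete.functor N), fun n => ?_, ?_⟩
    · exact AddK.cofan_mem hreg hB hIc (fun i => hN i n) _ (evalCofanIsColimit N n)
    · exact retract_pt hc hq hret
  have hL : IsKappaLocalizing (HomotopyCategory B (ComplexShape.up ℤ)) κ L :=
    ⟨hzeroL, hisoL, hsummandL, hshiftL, hextL, hcoprodL⟩
  have hsub : KLoc (HomotopyCategory B (ComplexShape.up ℤ)) κ (Set.range g) ⊆ L :=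
    fun W hW => hW L ⟨hL, hLS⟩
  have hall : ∀ W : HomotopyCategory B (ComplexShape.up ℤ), W ∈ L := by
    intro W
    apply hsub
    rw [hgen]
    trivial
  -- conclusion
  refine ⟨XG, fun Y => ?_⟩
  obtain ⟨N, hN, hr⟩ := (hmemL _).1 (hall
    ((HomotopyCategory.quotient B (ComplexShape.up ℤ)).obj
      ((HomologicalComplex.single B (ComplexShape.up ℤ) 0).obj Y)))
  obtain ⟨s, r, hsr⟩ := hr.out
  obtain ⟨σ, hσ⟩ := (HomotopyCategory.quotient B (ComplexShape.up ℤ)).map_surjective s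
  obtain ⟨ρ, hρ⟩ := (HomotopyCategory.quotient B (ComplexShape.up ℤ)).map_surjective r
  have hhom : Homotopy (σ ≫ ρ) (𝟙 _) := HomotopyCategory.homotopyOfEq _ _ (by
    rw [Functor.map_comp, hσ, hρ, hsr, CategoryTheory.Functor.map_id])
  have h0 := hhom.comm 0
  rw [dNext_eq _ (show (ComplexShape.up ℤ).Rel 0 1 by simp),
    prevD_eq _ (show (ComplexShape.up ℤ).Rel (-1) 0 by simp)] at h0
  simp only [HomologicalComplex.single_obj_d, zero_comp, comp_zero, zero_add, add_zero,
    HomologicalComplex.id_f, HomologicalComplex.comp_f] at h0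
  exact AddK.of_iso (HomologicalComplex.singleObjXSelf (ComplexShape.up ℤ) 0 Y).symm
    (AddK.of_retract ⟨σ.f 0, ρ.f 0, h0⟩ (hN 0))

end LocWellGen
end
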